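/- Let n ≥ 1 and q ≥ 2, let f_1, …, f_q : ℝⁿ → ℝⁿ be contractions (each f_j is Lipschitz with some constant r_j < 1), and let E ⊆ ℝⁿ be a nonempty compact set with E = ⋃_{j=1}^q f_j(E). Then E, equipped with the subspace topology, is locally connected if and only if E has only finitely many connected components; and in that case every connected component of E is a Peano continuum (i.e. compact, connected and locally connected). -/
import Mathlib

open Set Metric Filter Topology

/-- If a set `E` in a metric space is, for every `ε > 0`, a finite union of closed
preconnected sets of diameter at most `ε`, then `E` (with the subspace topology) is
locally connected. -/
lemma locallyConnected_of_fine_decompositions {X : Type*} [MetricSpace X] (E : Set X)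
    (h : ∀ ε : ENNReal, 0 < ε → ∃ 𝒮 : Set (Set X), 𝒮.Finite ∧ ⋃₀ 𝒮 = E ∧
      ∀ S ∈ 𝒮, IsClosed S ∧ IsPreconnected S ∧ EMetric.diam S ≤ ε) :
    LocallyConnectedSpace E := by
  rw [locallyConnectedSpace_iff_connected_subsets]
  rintro ⟨x, hxE⟩ U hU
  rw [nhds_subtype_eq_comap, Filter.mem_comap] at hU
  obtain ⟨t, ht, htU⟩ := hU
  obtain ⟨ε, hε, hball⟩ := Metric.mem_nhds_iff.mp ht
  obtain ⟨𝒮, h𝒮fin, h𝒮E, h𝒮⟩ := h (ENNReal.ofReal (ε / 2))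
    (ENNReal.ofReal_pos.mpr (by linarith))
  set A : Set X := ⋃₀ {S ∈ 𝒮 | x ∈ S} with hA
  set V : Set E := (↑) ⁻¹' A with hV
  have hAE : A ⊆ E := by
    rintro z ⟨S, hS, hzS⟩
    rw [← h𝒮E]
    exact ⟨S, hS.1, hzS⟩
  -- the union of pieces not containing x is closed and misses x
  set W : Set X := ⋃₀ {S ∈ 𝒮 | x ∉ S} with hW
  have hWclosed : IsClosed W := by
    rw [hW, sUnion_eq_biUnion]
    exact (h𝒮fin.subset (sep_subset _ _)).isClosed_biUnion fun S hS => (h𝒮 S hS.1).1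
  have hxW : x ∉ W := by
    rintro ⟨S, hS, hxS⟩
    exact hS.2 hxS
  refine ⟨V, ?_, ?_, ?_⟩
  · -- V is a neighborhood of x
    have h1 : ((↑) : E → X) ⁻¹' Wᶜ ∈ 𝓝 (⟨x, hxE⟩ : E) := by
      rw [nhds_subtype_eq_comap]
      exact Filter.preimage_mem_comap (hWclosed.isOpen_compl.mem_nhds hxW)
    refine Filter.mem_of_superset h1 ?_
    rintro ⟨z, hzE⟩ hz
    have hz𝒮 : z ∈ ⋃₀ 𝒮 := h𝒮E.symm ▸ hzE
    obtain ⟨S, hS, hzS⟩ := hz𝒮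
    by_cases hxS : x ∈ S
    · exact ⟨S, ⟨hS, hxS⟩, hzS⟩
    · exact absurd (⟨S, ⟨hS, hxS⟩, hzS⟩ : z ∈ W) hz
  · -- V is preconnected
    have himg : ((↑) : E → X) '' V = A := by
      rw [hV, Subtype.image_preimage_coe, inter_eq_self_of_subset_right hAE]
    refine Topology.IsInducing.subtypeVal.isPreconnected_image.mp ?_
    rw [himg]
    exact isPreconnected_sUnion x _ (fun S hS => hS.2) (fun S hS => (h𝒮 S hS.1).2.1)
  · -- V ⊆ U
    rintro ⟨z, hzE⟩ ⟨S, ⟨hS, hxS⟩, hzS⟩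
    apply htU
    have hdist : dist z x ≤ ε / 2 := by
      have := (EMetric.edist_le_diam_of_mem hzS hxS).trans (h𝒮 S hS).2.2
      exact (edist_le_ofReal (by linarith)).mp this
    exact hball (by simp [Metric.mem_ball]; linarith)

/-- Let `E ⊆ ℝⁿ` be a self-similar set (a nonempty compact set equal to
the union of its images under finitely many contractions). Then `E` is locally connected
iff it has finitely many connected components, and in that case every connected component
of `E` is a Peano continuum (compact, connected and locally connected). -/
theorem self_similar_locallyConnected_iff_finitely_many_components
    (n q : ℕ) (hn : 1 ≤ n) (hq : 2 ≤ q)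
    (f : Fin q → EuclideanSpace ℝ (Fin n) → EuclideanSpace ℝ (Fin n))
    (r : Fin q → NNReal) (hr : ∀ j, r j < 1)
    (hf : ∀ j, LipschitzWith (r j) (f j))
    (E : Set (EuclideanSpace ℝ (Fin n)))
    (hEne : E.Nonempty) (hEc : IsCompact E)
    (hE : E = ⋃ j, f j '' E) :
    (LocallyConnectedSpace E ↔
      {C : Set (EuclideanSpace ℝ (Fin n)) | ∃ x ∈ E, C = connectedComponentIn E x}.Finite)
    ∧ (LocallyConnectedSpace E →
        ∀ x ∈ E, IsCompact (connectedComponentIn E x)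
          ∧ IsConnected (connectedComponentIn E x)
          ∧ LocallyConnectedSpace (connectedComponentIn E x)) := by
  haveI : CompactSpace E := isCompact_iff_compactSpace.mp hEc
  set 𝒞 : Set (Set (EuclideanSpace ℝ (Fin n))) := {C | ∃ x ∈ E, C = connectedComponentIn E x} with h𝒞
  -- components are compact
  have hcompact : ∀ x ∈ E, IsCompact (connectedComponentIn E x) := by
    intro x hx
    rw [connectedComponentIn_eq_image hx]
    exact (isClosed_connectedComponent.isCompact).image continuous_subtype_val
  -- key decomposition lemma, assuming finitely many components
  have key : 𝒞.Finite → ∀ ε : ENNReal, 0 < ε → ∃ 𝒮 : Set (Set (EuclideanSpace ℝ (Fin n))), 𝒮.Finite ∧ ⋃₀ 𝒮 = E ∧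
      ∀ S ∈ 𝒮, IsClosed S ∧ IsPreconnected S ∧ EMetric.diam S ≤ ε := by
    intro hfin ε hε
    set ρ : NNReal := Finset.univ.sup r with hρ
    have hρ1 : ρ < 1 := Finset.sup_lt_iff zero_lt_one |>.mpr fun j _ => hr j
    have hρj : ∀ j, r j ≤ ρ := fun j => Finset.le_sup (Finset.mem_univ j)
    set D : ENNReal := EMetric.diam E with hD
    have hDne : D ≠ ⊤ := hEc.isBounded.ediam_ne_top
    have step : ∀ k : ℕ, ∃ 𝒮 : Set (Set (EuclideanSpace ℝ (Fin n))), 𝒮.Finite ∧ ⋃₀ 𝒮 = E ∧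
        ∀ S ∈ 𝒮, IsCompact S ∧ IsPreconnected S ∧ EMetric.diam S ≤ (ρ : ENNReal) ^ k * D := by
      intro k
      induction k with
      | zero =>
        refine ⟨𝒞, hfin, ?_, ?_⟩
        · apply subset_antisymm
          · rintro z ⟨S, ⟨x, hx, rfl⟩, hzS⟩
            exact connectedComponentIn_subset E x hzS
          · intro z hz
            exact ⟨connectedComponentIn E z, ⟨z, hz, rfl⟩, mem_connectedComponentIn hz⟩
        · rintro S ⟨x, hx, rfl⟩
          refine ⟨hcompact x hx, isPreconnected_connectedComponentIn, ?_⟩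
          rw [pow_zero, one_mul]
          exact EMetric.diam_mono (connectedComponentIn_subset E x)
      | succ k ih =>
        obtain ⟨𝒮, h𝒮fin, h𝒮E, h𝒮⟩ := ih
        refine ⟨⋃ j : Fin q, (fun S => f j '' S) '' 𝒮, ?_, ?_, ?_⟩
        · exact Set.finite_iUnion fun j => h𝒮fin.image _
        · rw [sUnion_iUnion]
          have : ∀ j : Fin q, ⋃₀ ((fun S => f j '' S) '' 𝒮) = f j '' E := by
            intro j
            rw [sUnion_image, ← image_iUnion₂, ← sUnion_eq_biUnion, h𝒮E]
          simp_rw [this]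
          exact hE.symm
        · rintro S hS
          simp only [mem_iUnion, mem_image] at hS
          obtain ⟨j, T, hT, rfl⟩ := hS
          obtain ⟨hTc, hTp, hTd⟩ := h𝒮 T hT
          refine ⟨hTc.image (hf j).continuous,
            hTp.image _ (hf j).continuous.continuousOn, ?_⟩
          calc EMetric.diam (f j '' T) ≤ (r j : ENNReal) * EMetric.diam T :=
                (hf j).ediam_image_le T
            _ ≤ (ρ : ENNReal) * ((ρ : ENNReal) ^ k * D) :=
                mul_le_mul' (ENNReal.coe_le_coe.mpr (hρj j)) hTd
            _ = (ρ : ENNReal) ^ (k + 1) * D := by rw [pow_succ]; ring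
    -- choose k with ρ^k * D ≤ ε
    have htend : Tendsto (fun k : ℕ => (ρ : ENNReal) ^ k * D) atTop (𝓝 0) := by
      have h0 : Tendsto (fun k : ℕ => (ρ : ENNReal) ^ k) atTop (𝓝 0) :=
        ENNReal.tendsto_pow_atTop_nhds_zero_of_lt_one (by exact_mod_cast hρ1)
      simpa using ENNReal.Tendsto.mul_const h0 (Or.inr hDne)
    obtain ⟨k, hk⟩ := (htend.eventually_lt_const hε).exists
    obtain ⟨𝒮, h𝒮fin, h𝒮E, h𝒮⟩ := step k
    exact ⟨𝒮, h𝒮fin, h𝒮E, fun S hS => ⟨(h𝒮 S hS).1.isClosed, (h𝒮 S hS).2.1,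
      (h𝒮 S hS).2.2.trans hk.le⟩⟩
  -- forward direction: locally connected implies finitely many components
  have hforward : LocallyConnectedSpace E → 𝒞.Finite := by
    intro hLC
    obtain ⟨t, ht⟩ := isCompact_univ.elim_finite_subcover
      (fun y : E => connectedComponent y) (fun y => isOpen_connectedComponent)
      (fun y _ => mem_iUnion.mpr ⟨y, mem_connectedComponent⟩)
    refine Set.Finite.subset (t.finite_toSet.image
      (fun y : E => (Subtype.val : E → EuclideanSpace ℝ (Fin n)) '' connectedComponent y)) ?_
    rintro C ⟨x, hx, rfl⟩
    obtain ⟨y, hyt, hmem⟩ := mem_iUnion₂.mp (ht (mem_univ (⟨x, hx⟩ : E)))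
    refine ⟨y, hyt, ?_⟩
    show Subtype.val '' connectedComponent y = _
    rw [connectedComponentIn_eq_image hx, connectedComponent_eq hmem]
  constructor
  · constructor
    · exact hforward
    · intro hfin
      exact locallyConnected_of_fine_decompositions E (key hfin)
  · intro hLC x hx
    refine ⟨hcompact x hx, isConnected_connectedComponentIn_iff.mpr hx, ?_⟩
    apply locallyConnected_of_fine_decompositions
    intro ε hε
    obtain ⟨𝒮, h𝒮fin, h𝒮E, h𝒮⟩ := key (hforward hLC) ε hε
    refine ⟨{S ∈ 𝒮 | S ⊆ connectedComponentIn E x}, h𝒮fin.subset (sep_subset _ _), ?_,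
      fun S hS => h𝒮 S hS.1⟩
    apply subset_antisymm
    · rintro z ⟨S, hS, hzS⟩
      exact hS.2 hzS
    · intro z hz
      have hzE : z ∈ E := connectedComponentIn_subset E x hz
      obtain ⟨S, hS, hzS⟩ := (h𝒮E.symm ▸ hzE : z ∈ ⋃₀ 𝒮)
      have hSE : S ⊆ E := by
        intro w hw
        rw [← h𝒮E]
        exact ⟨S, hS, hw⟩
      have hSC : S ⊆ connectedComponentIn E x := by
        rw [connectedComponentIn_eq hz]
        exact (h𝒮 S hS).2.1.subset_connectedComponentIn hzS hSE
      exact ⟨S, ⟨hS, hSC⟩, hzS⟩
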